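/- Let r ≥ 3 and consider ℝ^{2r} with the product topology. The set W of tuples (a₁, …, a_{2r}) ∈ ℝ^{2r} with pairwise distinct entries for which there exist real numbers α, β, γ, δ with αδ − βγ ≠ 0 such that (i) for every i, γ·aᵢ + δ ≠ 0 and (α·aᵢ + β)/(γ·aᵢ + δ) ∈ {a₁, …, a_{2r}}, and (ii) for some j, (α·a_j + β)/(γ·a_j + δ) ≠ a_j, has empty interior in ℝ^{2r}. In other words, a general set of 2r distinct points of the real line admits no nontrivial Möbius symmetry. -/

import Mathlib

private lemma quad_three_roots {A B C x₁ x₂ x₃ : ℝ}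
    (h12 : x₁ ≠ x₂) (h13 : x₁ ≠ x₃) (h23 : x₂ ≠ x₃)
    (h1 : A * x₁ ^ 2 + B * x₁ + C = 0)
    (h2 : A * x₂ ^ 2 + B * x₂ + C = 0)
    (h3 : A * x₃ ^ 2 + B * x₃ + C = 0) :
    A = 0 ∧ B = 0 ∧ C = 0 := by
  have e12 : (x₁ - x₂) * (A * (x₁ + x₂) + B) = 0 := by linear_combination h1 - h2
  have e13 : (x₁ - x₃) * (A * (x₁ + x₃) + B) = 0 := by linear_combination h1 - h3
  have f12 : A * (x₁ + x₂) + B = 0 :=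
    (mul_eq_zero.1 e12).resolve_left (sub_ne_zero.2 h12)
  have f13 : A * (x₁ + x₃) + B = 0 :=
    (mul_eq_zero.1 e13).resolve_left (sub_ne_zero.2 h13)
  have hA : A = 0 := by
    have h : A * (x₂ - x₃) = 0 := by linear_combination f12 - f13
    exact (mul_eq_zero.1 h).resolve_right (sub_ne_zero.2 h23)
  have hB : B = 0 := by linear_combination f12 - (x₁ + x₂) * hA
  exact ⟨hA, hB, by linear_combination h1 - x₁ ^ 2 * hA - x₁ * hB⟩

private lemma mobius_agree {α β γ δ α' β' γ' δ' x₁ x₂ x₃ : ℝ}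
    (h12 : x₁ ≠ x₂) (h13 : x₁ ≠ x₃) (h23 : x₂ ≠ x₃)
    (h1 : (α * x₁ + β) * (γ' * x₁ + δ') = (α' * x₁ + β') * (γ * x₁ + δ))
    (h2 : (α * x₂ + β) * (γ' * x₂ + δ') = (α' * x₂ + β') * (γ * x₂ + δ))
    (h3 : (α * x₃ + β) * (γ' * x₃ + δ') = (α' * x₃ + β') * (γ * x₃ + δ))
    (x : ℝ) :
    (α * x + β) * (γ' * x + δ') = (α' * x + β') * (γ * x + δ) := by
  obtain ⟨hA, hB, hC⟩ := quad_three_roots (A := α * γ' - α' * γ)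
    (B := α * δ' + β * γ' - α' * δ - β' * γ) (C := β * δ' - β' * δ)
    h12 h13 h23 (by linear_combination h1) (by linear_combination h2)
    (by linear_combination h3)
  linear_combination x ^ 2 * hA + x * hB + hC

theorem mobius_symmetric_tuples_empty_interior (r : ℕ) (hr : 3 ≤ r) :
    interior {a : Fin (2 * r) → ℝ | Function.Injective a ∧
      ∃ α β γ δ : ℝ, α * δ - β * γ ≠ 0 ∧
        (∀ i, γ * a i + δ ≠ 0 ∧ (α * a i + β) / (γ * a i + δ) ∈ Set.range a) ∧
        (∃ j, (α * a j + β) / (γ * a j + δ) ≠ a j)} = ∅ := by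
  set W : Set (Fin (2 * r) → ℝ) := {a : Fin (2 * r) → ℝ | Function.Injective a ∧
      ∃ α β γ δ : ℝ, α * δ - β * γ ≠ 0 ∧
        (∀ i, γ * a i + δ ≠ 0 ∧ (α * a i + β) / (γ * a i + δ) ∈ Set.range a) ∧
        (∃ j, (α * a j + β) / (γ * a j + δ) ≠ a j)} with hWdef
  rw [Set.eq_empty_iff_forall_notMem]
  intro a ha
  have haW : a ∈ W := interior_subset ha
  have ha_inj : Function.Injective a := haW.1
  obtain ⟨ε, hε, hball⟩ := Metric.mem_nhds_iff.1 (mem_interior_iff_mem_nhds.1 ha)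
  have hr2 : 0 < 2 * r := by omega
  set p : Fin (2 * r) := ⟨0, hr2⟩ with hp
  set I : Set ℝ := Set.Ioo (a p - ε) (a p + ε) with hIdef
  -- every one-coordinate perturbation stays in W
  have hWt : ∀ t ∈ I, Function.update a p t ∈ W := by
    intro t ht
    apply hball
    rw [Metric.mem_ball, dist_pi_lt_iff hε]
    intro i
    by_cases hip : i = p
    · subst hip
      rw [Function.update_self, Real.dist_eq, abs_lt]
      obtain ⟨h1, h2⟩ := ht
      constructor <;> linarith
    · rw [Function.update_of_ne hip, dist_self]
      exact hε
  -- extract Möbius data for each t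
  have hex : ∀ t, t ∈ I → ∃ α β γ δ : ℝ, α * δ - β * γ ≠ 0 ∧
      (∀ i, γ * Function.update a p t i + δ ≠ 0 ∧
        ∃ k, Function.update a p t k =
          (α * Function.update a p t i + β) / (γ * Function.update a p t i + δ)) ∧
      (∃ j, (α * Function.update a p t j + β) / (γ * Function.update a p t j + δ) ≠
        Function.update a p t j) := by
    intro t ht
    obtain ⟨-, α, β, γ, δ, hΔ, hmain, hj⟩ := hWt t ht
    exact ⟨α, β, γ, δ, hΔ, fun i => ⟨(hmain i).1,
      by obtain ⟨k, hk⟩ := Set.mem_range.1 (hmain i).2; exact ⟨k, hk⟩⟩, hj⟩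
  choose cα cβ cγ cδ hΔ hmain hjx using hex
  have hexF : ∀ t (ht : t ∈ I) i, ∃ k, Function.update a p t k =
      (cα t ht * Function.update a p t i + cβ t ht) /
        (cγ t ht * Function.update a p t i + cδ t ht) :=
    fun t ht i => (hmain t ht i).2
  choose F hF using hexF
  -- injectivity of each F
  have hFinj : ∀ t (ht : t ∈ I), Function.Injective (F t ht) := by
    intro t ht i j hij
    have hbinj : Function.Injective (Function.update a p t) := (hWt t ht).1
    set b := Function.update a p t with hb
    have hi := hF t ht i
    have hj := hF t ht j
    rw [hij, hj] at hi
    have hdi := (hmain t ht i).1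
    have hdj := (hmain t ht j).1
    rw [div_eq_div_iff hdj hdi] at hi
    have : (cα t ht * cδ t ht - cβ t ht * cγ t ht) * (b j - b i) = 0 := by
      linear_combination hi
    have hbij : b i = b j :=
      (sub_eq_zero.1 ((mul_eq_zero.1 this).resolve_left (hΔ t ht))).symm
    exact hbinj hbij
  -- pigeonhole: infinitely many t share the same index map
  haveI : Infinite I := by
    rw [hIdef]; exact Set.Ioo.infinite (by linarith)
  set G : I → (Fin (2 * r) → Fin (2 * r)) := fun t => F t.1 t.2 with hG
  obtain ⟨f₀, hfib⟩ := Finite.exists_infinite_fiber G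
  haveI := hfib
  set e : ℕ ↪ ↥(G ⁻¹' {f₀}) := Infinite.natEmbedding _ with he
  set s₁ := e 0 with hs₁
  set s₂ := e 1 with hs₂
  set s₃ := e 2 with hs₃
  set t₁ : ℝ := (s₁.1 : ℝ) with ht₁def
  set t₂ : ℝ := (s₂.1 : ℝ) with ht₂def
  set t₃ : ℝ := (s₃.1 : ℝ) with ht₃def
  have ht₁ : t₁ ∈ I := s₁.1.2
  have ht₂ : t₂ ∈ I := s₂.1.2
  have ht₃ : t₃ ∈ I := s₃.1.2
  have hne : ∀ m n : ℕ, m ≠ n → ((e m).1 : ℝ) ≠ ((e n).1 : ℝ) := by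
    intro m n hmn h
    exact hmn (e.injective (Subtype.ext (Subtype.ext h)))
  have h12 : t₁ ≠ t₂ := hne 0 1 (by norm_num)
  have h13 : t₁ ≠ t₃ := hne 0 2 (by norm_num)
  have h23 : t₂ ≠ t₃ := hne 1 2 (by norm_num)
  have hF₁ : F t₁ ht₁ = f₀ := s₁.2
  have hF₂ : F t₂ ht₂ = f₀ := s₂.2
  have hF₃ : F t₃ ht₃ = f₀ := s₃.2
  -- short names for the coefficients
  set α₁ := cα t₁ ht₁; set β₁ := cβ t₁ ht₁; set γ₁ := cγ t₁ ht₁; set δ₁ := cδ t₁ ht₁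
  set α₂ := cα t₂ ht₂; set β₂ := cβ t₂ ht₂; set γ₂ := cγ t₂ ht₂; set δ₂ := cδ t₂ ht₂
  set α₃ := cα t₃ ht₃; set β₃ := cβ t₃ ht₃; set γ₃ := cγ t₃ ht₃; set δ₃ := cδ t₃ ht₃
  have hup_ne : ∀ (t : ℝ) (i : Fin (2 * r)), i ≠ p → Function.update a p t i = a i :=
    fun t i h => Function.update_of_ne h t a
  have hf₀inj : Function.Injective f₀ := hF₁ ▸ hFinj t₁ ht₁
  -- the key algebraic relations for indices away from p
  have key : ∀ (t : ℝ) (ht : t ∈ I), F t ht = f₀ → ∀ i, i ≠ p → f₀ i ≠ p →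
      cα t ht * a i + cβ t ht = a (f₀ i) * (cγ t ht * a i + cδ t ht) := by
    intro t ht hFt i hip hfip
    have h1 := hF t ht i
    rw [hFt, hup_ne t i hip, hup_ne t (f₀ i) hfip] at h1
    have hd := (hmain t ht i).1
    rw [hup_ne t i hip] at hd
    exact ((eq_div_iff hd).1 h1).symm
  -- choose three reference indices avoiding p and f₀⁻¹(p)
  classical
  set good : Finset (Fin (2 * r)) :=
    Finset.univ.filter (fun i => ¬(i = p ∨ f₀ i = p)) with hgood
  have hgood3 : 3 ≤ good.card := by
    have hbad : (Finset.univ.filter (fun i : Fin (2 * r) => i = p ∨ f₀ i = p)).card ≤ 2 := by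
      have hsub : (Finset.univ.filter (fun i : Fin (2 * r) => i = p ∨ f₀ i = p)) ⊆
          {p} ∪ Finset.univ.filter (fun i => f₀ i = p) := by
        intro i hi
        rcases (Finset.mem_filter.1 hi).2 with h | h
        · exact Finset.mem_union_left _ (by simp [h])
        · exact Finset.mem_union_right _ (Finset.mem_filter.2 ⟨Finset.mem_univ _, h⟩)
      have h1 : (Finset.univ.filter (fun i : Fin (2 * r) => f₀ i = p)).card ≤ 1 := by
        apply Finset.card_le_one.2
        intro x hx y hy
        apply hf₀inj
        rw [(Finset.mem_filter.1 hx).2, (Finset.mem_filter.1 hy).2]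
      calc _ ≤ ({p} ∪ Finset.univ.filter (fun i : Fin (2 * r) => f₀ i = p)).card :=
            Finset.card_le_card hsub
        _ ≤ 1 + 1 := le_trans (Finset.card_union_le _ _) (by simp [h1]; omega)
        _ = 2 := rfl
    have hsum := Finset.card_filter_add_card_filter_not
      (s := (Finset.univ : Finset (Fin (2 * r)))) (p := fun i => i = p ∨ f₀ i = p)
    have huniv : (Finset.univ : Finset (Fin (2 * r))).card = 2 * r := by simp
    rw [hgood]
    omega
  obtain ⟨s3, hs3sub, hs3card⟩ := Finset.exists_subset_card_eq hgood3
  obtain ⟨i₁, i₂, i₃, hi12, hi13, hi23, hs3eq⟩ := Finset.card_eq_three.1 hs3card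
  have hmem : ∀ i ∈ s3, i ≠ p ∧ f₀ i ≠ p := by
    intro i hi
    have := (Finset.mem_filter.1 (hs3sub hi)).2
    push_neg at this
    exact this
  have hm1 := hmem i₁ (by rw [hs3eq]; simp)
  have hm2 := hmem i₂ (by rw [hs3eq]; simp)
  have hm3 := hmem i₃ (by rw [hs3eq]; simp)
  have hx12 : a i₁ ≠ a i₂ := fun h => hi12 (ha_inj h)
  have hx13 : a i₁ ≠ a i₃ := fun h => hi13 (ha_inj h)
  have hx23 : a i₂ ≠ a i₃ := fun h => hi23 (ha_inj h)
  have k1 := key t₁ ht₁ hF₁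
  have k2 := key t₂ ht₂ hF₂
  have k3 := key t₃ ht₃ hF₃
  -- the Möbius maps for t₁, t₂ (resp. t₁, t₃) agree projectively everywhere
  have R12 : ∀ x : ℝ, (α₁ * x + β₁) * (γ₂ * x + δ₂) = (α₂ * x + β₂) * (γ₁ * x + δ₁) :=
    mobius_agree hx12 hx13 hx23
      (by linear_combination (γ₂ * a i₁ + δ₂) * k1 i₁ hm1.1 hm1.2 -
        (γ₁ * a i₁ + δ₁) * k2 i₁ hm1.1 hm1.2)
      (by linear_combination (γ₂ * a i₂ + δ₂) * k1 i₂ hm2.1 hm2.2 -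
        (γ₁ * a i₂ + δ₁) * k2 i₂ hm2.1 hm2.2)
      (by linear_combination (γ₂ * a i₃ + δ₂) * k1 i₃ hm3.1 hm3.2 -
        (γ₁ * a i₃ + δ₁) * k2 i₃ hm3.1 hm3.2)
  have R13 : ∀ x : ℝ, (α₁ * x + β₁) * (γ₃ * x + δ₃) = (α₃ * x + β₃) * (γ₁ * x + δ₁) :=
    mobius_agree hx12 hx13 hx23
      (by linear_combination (γ₃ * a i₁ + δ₃) * k1 i₁ hm1.1 hm1.2 -
        (γ₁ * a i₁ + δ₁) * k3 i₁ hm1.1 hm1.2)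
      (by linear_combination (γ₃ * a i₂ + δ₃) * k1 i₂ hm2.1 hm2.2 -
        (γ₁ * a i₂ + δ₁) * k3 i₂ hm2.1 hm2.2)
      (by linear_combination (γ₃ * a i₃ + δ₃) * k1 i₃ hm3.1 hm3.2 -
        (γ₁ * a i₃ + δ₁) * k3 i₃ hm3.1 hm3.2)
  -- the image of the varying point p
  have himg : ∀ (t : ℝ) (ht : t ∈ I), F t ht = f₀ →
      Function.update a p t (f₀ p) * (cγ t ht * t + cδ t ht) = cα t ht * t + cβ t ht ∧
        cγ t ht * t + cδ t ht ≠ 0 := by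
    intro t ht hFt
    have h1 := hF t ht p
    rw [hFt, Function.update_self] at h1
    have hd := (hmain t ht p).1
    rw [Function.update_self] at hd
    exact ⟨(eq_div_iff hd).1 h1, hd⟩
  by_cases hq : f₀ p = p
  · -- Case A: p is "fixed": all three maps fix t₁, t₂, t₃, hence m₁ = id, contradiction
    have fix : ∀ (t : ℝ) (ht : t ∈ I), F t ht = f₀ →
        cα t ht * t + cβ t ht = t * (cγ t ht * t + cδ t ht) ∧ cγ t ht * t + cδ t ht ≠ 0 := by
      intro t ht hFt
      obtain ⟨h1, hd⟩ := himg t ht hFt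
      rw [hq, Function.update_self] at h1
      exact ⟨h1.symm, hd⟩
    obtain ⟨e1, d1⟩ := fix t₁ ht₁ hF₁
    obtain ⟨e2, d2⟩ := fix t₂ ht₂ hF₂
    obtain ⟨e3, d3⟩ := fix t₃ ht₃ hF₃
    have root1 : γ₁ * t₁ ^ 2 + (δ₁ - α₁) * t₁ + -β₁ = 0 := by linear_combination -e1
    have root2 : γ₁ * t₂ ^ 2 + (δ₁ - α₁) * t₂ + -β₁ = 0 := by
      have hz : (γ₁ * t₂ ^ 2 + (δ₁ - α₁) * t₂ + -β₁) * (γ₂ * t₂ + δ₂) = 0 := by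
        linear_combination (-(γ₁ * t₂ + δ₁)) * e2 - R12 t₂
      exact (mul_eq_zero.1 hz).resolve_right d2
    have root3 : γ₁ * t₃ ^ 2 + (δ₁ - α₁) * t₃ + -β₁ = 0 := by
      have hz : (γ₁ * t₃ ^ 2 + (δ₁ - α₁) * t₃ + -β₁) * (γ₃ * t₃ + δ₃) = 0 := by
        linear_combination (-(γ₁ * t₃ + δ₁)) * e3 - R13 t₃
      exact (mul_eq_zero.1 hz).resolve_right d3
    obtain ⟨hγ0, hδα, hβ0'⟩ := quad_three_roots h12 h13 h23 root1 root2 root3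
    obtain ⟨j, hjne⟩ := hjx t₁ ht₁
    apply hjne
    have hd := (hmain t₁ ht₁ j).1
    rw [div_eq_iff hd]
    linear_combination (-(Function.update a p t₁ j ^ 2)) * hγ0 -
      Function.update a p t₁ j * hδα - hβ0'
  · -- Case B: m₁ and m₂ both send their (distinct) varying points to a (f₀ p): degenerate
    have img : ∀ (t : ℝ) (ht : t ∈ I), F t ht = f₀ →
        cα t ht * t + cβ t ht = a (f₀ p) * (cγ t ht * t + cδ t ht) ∧
          cγ t ht * t + cδ t ht ≠ 0 := by
      intro t ht hFt
      obtain ⟨h1, hd⟩ := himg t ht hFt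
      rw [hup_ne t (f₀ p) hq] at h1
      exact ⟨h1.symm, hd⟩
    obtain ⟨e1, d1⟩ := img t₁ ht₁ hF₁
    obtain ⟨e2, d2⟩ := img t₂ ht₂ hF₂
    have eB2 : α₁ * t₂ + β₁ = a (f₀ p) * (γ₁ * t₂ + δ₁) := by
      have hz : (α₁ * t₂ + β₁ - a (f₀ p) * (γ₁ * t₂ + δ₁)) * (γ₂ * t₂ + δ₂) = 0 := by
        linear_combination R12 t₂ + (γ₁ * t₂ + δ₁) * e2
      have := (mul_eq_zero.1 hz).resolve_right d2
      linarith [this]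
    have hαγ : α₁ - a (f₀ p) * γ₁ = 0 := by
      have hz : (α₁ - a (f₀ p) * γ₁) * (t₁ - t₂) = 0 := by
        linear_combination e1 - eB2
      exact (mul_eq_zero.1 hz).resolve_right (sub_ne_zero.2 h12)
    have hβδ : β₁ - a (f₀ p) * δ₁ = 0 := by linear_combination e1 - t₁ * hαγ
    exact hΔ t₁ ht₁ (by linear_combination δ₁ * hαγ - γ₁ * hβδ)
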